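/- Let a < b be real numbers and 1 < α < 2. Let g : ℝ → ℝ be continuously differentiable on [a,b] and suppose g attains its global minimum over [a,b] at a point ξ ∈ (a,b). If the conformable derivative of g of order α at ξ exists, i.e. there is a real number L such that (g'(ξ + ε·(ξ−a)^{2−α}) − g'(ξ))/ε tends to L as ε → 0 (ε ≠ 0), then L ≥ 0. -/

import Mathlib

open Set Filter Topology

/-- Conformable-derivative analogue of the first-derivative test at an interior
global minimum: if `g` is `C¹` on `[a, b]`, attains its global minimum over `[a, b]`
at `ξ ∈ (a, b)`, and the conformable derivative of order `α` (`1 < α < 2`, base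
point `a`) of `g` at `ξ` exists with value `L`, then `L ≥ 0`. -/
theorem conformable_deriv_nonneg_at_interior_min
    (a b α : ℝ) (hab : a < b) (hα1 : 1 < α) (hα2 : α < 2)
    (g : ℝ → ℝ) (hg : ContDiffOn ℝ 1 g (Set.Icc a b))
    (ξ : ℝ) (hξ : ξ ∈ Set.Ioo a b)
    (hmin : ∀ t ∈ Set.Icc a b, g ξ ≤ g t)
    (L : ℝ)
    (hL : Tendsto (fun ε : ℝ =>
        (deriv g (ξ + ε * (ξ - a) ^ ((2 : ℝ) - α)) - deriv g ξ) / ε)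
      (𝓝[≠] (0 : ℝ)) (𝓝 L)) :
    0 ≤ L := by
  set c : ℝ := (ξ - a) ^ ((2 : ℝ) - α) with hc
  have hc0 : 0 < c := Real.rpow_pos_of_pos (by linarith [hξ.1]) _
  -- deriv g ξ = 0
  have hloc : IsLocalMin g ξ := by
    have : Set.Icc a b ∈ 𝓝 ξ := Icc_mem_nhds hξ.1 hξ.2
    exact Filter.eventually_of_mem this hmin
  have hd0 : deriv g ξ = 0 := hloc.deriv_eq_zero
  by_contra hL0
  push_neg at hL0
  have hev : ∀ᶠ ε in 𝓝[≠] (0:ℝ),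
      (deriv g (ξ + ε * c) - deriv g ξ) / ε < 0 :=
    hL.eventually (Filter.Tendsto.eventually_lt_const hL0 tendsto_id) |>.mono (fun x hx => hx)
  have hev' : ∀ᶠ ε in 𝓝[>] (0:ℝ), (deriv g (ξ + ε * c) - deriv g ξ) / ε < 0 :=
    hev.filter_mono (nhdsWithin_mono _ (fun x hx => ne_of_gt hx))
  obtain ⟨δ, hδ0, hδ⟩ := (Metric.mem_nhdsWithin_iff.mp hev')
  -- pick η
  set η : ℝ := min (δ * c / 2) ((b - ξ) / 2) with hη
  have hη0 : 0 < η := lt_min (by positivity) (by linarith [hξ.2])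
  have hηb : ξ + η ≤ b := by
    have : η ≤ (b - ξ) / 2 := min_le_right _ _
    linarith
  -- deriv g t < 0 for t in Ioc ξ (ξ+η)
  have hneg : ∀ t ∈ Set.Ioo ξ (ξ + η), deriv g t < 0 := by
    intro t ht
    have hε0 : 0 < (t - ξ) / c := div_pos (by linarith [ht.1]) hc0
    have hεδ : (t - ξ) / c < δ := by
      have h1 : t - ξ < δ * c := by
        have : η ≤ δ * c / 2 := min_le_left _ _
        nlinarith [ht.2]
      rw [div_lt_iff₀ hc0]; linarith
    have hmem : (t - ξ) / c ∈ Metric.ball (0:ℝ) δ ∩ Set.Ioi 0 := by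
      constructor
      · simp only [Metric.mem_ball, Real.dist_eq, sub_zero]
        rw [abs_of_pos hε0]; exact hεδ
      · exact hε0
    have hlt := hδ hmem
    simp only [Set.mem_setOf_eq] at hlt
    have hrw : ξ + (t - ξ) / c * c = t := by field_simp; ring
    rw [hrw, hd0, sub_zero] at hlt
    have := (div_neg_iff.mp hlt)
    rcases this with ⟨h1, h2⟩ | ⟨h1, h2⟩
    · linarith
    · exact h1
  -- g strictly decreasing on [ξ, ξ+η]
  have hsub : Set.Icc ξ (ξ + η) ⊆ Set.Icc a b := by
    apply Set.Icc_subset_Icc (le_of_lt hξ.1) hηb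
  have hcont : ContinuousOn g (Set.Icc ξ (ξ + η)) := hg.continuousOn.mono hsub
  have hanti : StrictAntiOn g (Set.Icc ξ (ξ + η)) := by
    apply strictAntiOn_of_deriv_neg (convex_Icc _ _) hcont
    intro t ht
    rw [interior_Icc] at ht
    exact hneg t ht
  have h1 : g (ξ + η) < g ξ :=
    hanti (Set.left_mem_Icc.mpr (by linarith)) (Set.right_mem_Icc.mpr (by linarith))
      (by linarith)
  have h2 : g ξ ≤ g (ξ + η) := hmin _ ⟨by linarith [hξ.1], hηb⟩
  linarith
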